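/- Let p ≥ 1 be an integer, λ ∈ (0,1], and let F be a polyharmonic mapping of class HS_p(λ) with coefficients a_{n,k}, b_{n,k}. Let δ > 0 satisfy δ ≤ (λ/(p+λ))·(2 − Σ_{k=1}^p (2k−1)(|a_{1,k}| + |b_{1,k}|)). Then every polyharmonic mapping G in the δ-neighborhood N_δ(F) (with coefficients A_{n,k}, B_{n,k} and A_{1,1} = 1) belongs to the class HS_p, i.e., Σ_{k=1}^p Σ_{n=2}^∞ (2(k−1)+n)(|A_{n,k}| + |B_{n,k}|) ≤ 1 − |B_{1,1}| − Σ_{k=2}^p (2k−1)(|A_{1,k}| + |B_{1,k}|) and 0 ≤ |B_{1,1}| + Σ_{k=2}^p (|A_{1,k}| + |B_{1,k}|) < 1. -/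

import Mathlib

set_option maxHeartbeats 1000000


open Complex Metric Set

/-- The polyharmonic mapping associated to coefficients `a b : ℕ → ℕ → ℂ`
(`a n k` is the coefficient `a_{n,k}`):
`F(z) = Σ_{k=1}^p |z|^{2(k-1)} Σ_{n=1}^∞ (a_{n,k} z^n + conj(b_{n,k}) conj(z)^n)`. -/
noncomputable def polyF (p : ℕ) (a b : ℕ → ℕ → ℂ) (z : ℂ) : ℂ :=
  ∑ k ∈ Finset.Icc 1 p, ((‖z‖ : ℂ)) ^ (2 * (k - 1)) *
    ∑' n : ℕ, if 1 ≤ n then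
      a n k * z ^ n + (starRingEnd ℂ) (b n k) * ((starRingEnd ℂ) z) ^ n else 0

/-- The coefficient conditions defining the class `HS_p(λ)`. -/
def HSLam (p : ℕ) (lam : ℝ) (a b : ℕ → ℕ → ℂ) : Prop :=
  a 1 1 = 1 ∧
  (∀ k ∈ Finset.Icc 1 p,
    Summable (fun n : ℕ => ‖a n k‖ + ‖b n k‖)) ∧
  (∀ k ∈ Finset.Icc 1 p, Summable (fun n : ℕ =>
    if 2 ≤ n then (2 * ((k : ℝ) - 1) + n * (lam * n + 1 - lam)) *
      (‖a n k‖ + ‖b n k‖) else 0)) ∧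
  (∑ k ∈ Finset.Icc 1 p, ∑' n : ℕ,
      (if 2 ≤ n then (2 * ((k : ℝ) - 1) + n * (lam * n + 1 - lam)) *
        (‖a n k‖ + ‖b n k‖) else 0))
    ≤ 2 - ∑ k ∈ Finset.Icc 1 p,
        (2 * (k : ℝ) - 1) * (‖a 1 k‖ + ‖b 1 k‖) ∧
  1 ≤ ∑ k ∈ Finset.Icc 1 p,
        (2 * (k : ℝ) - 1) * (‖a 1 k‖ + ‖b 1 k‖) ∧
  ∑ k ∈ Finset.Icc 1 p,
        (2 * (k : ℝ) - 1) * (‖a 1 k‖ + ‖b 1 k‖) < 2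

/-- Triangle-type inequality used for coefficient comparisons. -/
lemma abs_le_abs_sub_add (x y : ℂ) :
    ‖y‖ ≤ ‖x - y‖ + ‖x‖ := by
  calc ‖y‖ = ‖(y - x) + x‖ := by ring_nf
    _ ≤ ‖y - x‖ + ‖x‖ := norm_add_le _ _
    _ = ‖x - y‖ + ‖x‖ := by rw [norm_sub_rev]

/-- Neighborhoods: if `F ∈ HS_p(λ)` with `λ ∈ (0,1]` and
`δ ≤ (λ/(p+λ))(2 − Σ_{k=1}^p (2k−1)(|a_{1,k}| + |b_{1,k}|))`, then every mapping in
the `δ`-neighborhood `N_δ(F)` belongs to `HS_p`. -/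
theorem neighborhood_in_HSp
    (p : ℕ) (hp : 1 ≤ p) (lam : ℝ) (hlam : lam ∈ Set.Ioc (0 : ℝ) 1)
    (a b : ℕ → ℕ → ℂ) (hF : HSLam p lam a b)
    (δ : ℝ) (hδ0 : 0 < δ)
    (hδ : δ ≤ lam / (p + lam) *
      (2 - ∑ k ∈ Finset.Icc 1 p,
        (2 * (k : ℝ) - 1) * (‖a 1 k‖ + ‖b 1 k‖)))
    (A B : ℕ → ℕ → ℂ) (hA11 : A 1 1 = 1)
    (hABsum : ∀ k ∈ Finset.Icc 1 p, Summable (fun n : ℕ =>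
      if 2 ≤ n then (2 * ((k : ℝ) - 1) + n) *
        (‖a n k - A n k‖ + ‖b n k - B n k‖) else 0))
    (hNbhd : ∑ k ∈ Finset.Icc 1 p, ∑' n : ℕ,
        (if 2 ≤ n then (2 * ((k : ℝ) - 1) + n) *
          (‖a n k - A n k‖ + ‖b n k - B n k‖) else 0)
      + ∑ k ∈ Finset.Icc 2 p,
          (2 * (k : ℝ) - 1) * (‖a 1 k - A 1 k‖ + ‖b 1 k - B 1 k‖)
      + ‖b 1 1 - B 1 1‖ ≤ δ) :
    (∑ k ∈ Finset.Icc 1 p, ∑' n : ℕ,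
        (if 2 ≤ n then (2 * ((k : ℝ) - 1) + n) *
          (‖A n k‖ + ‖B n k‖) else 0)
      ≤ 1 - ‖B 1 1‖ - ∑ k ∈ Finset.Icc 2 p,
          (2 * (k : ℝ) - 1) * (‖A 1 k‖ + ‖B 1 k‖)) ∧
    0 ≤ ‖B 1 1‖ + ∑ k ∈ Finset.Icc 2 p,
        (‖A 1 k‖ + ‖B 1 k‖) ∧
    ‖B 1 1‖ + ∑ k ∈ Finset.Icc 2 p,
        (‖A 1 k‖ + ‖B 1 k‖) < 1 := by
  obtain ⟨hlam0, hlam1⟩ := hlam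
  obtain ⟨ha11, _hsab, hsumW, hSF, hS1lo, hS1hi⟩ := hF
  have hp1 : (1:ℝ) ≤ p := by exact_mod_cast hp
  have hppos : (0:ℝ) < p := by linarith
  have hplpos : (0:ℝ) < (p:ℝ) + lam := by linarith
  set c : ℝ := (p:ℝ) / ((p:ℝ) + lam) with hc
  have hc0 : 0 < c := div_pos hppos hplpos
  have hcl : lam / ((p:ℝ) + lam) = 1 - c := by
    rw [hc, eq_sub_iff_add_eq, ← add_div, add_comm]
    exact div_self hplpos.ne'
  set S1 : ℝ := ∑ k ∈ Finset.Icc 1 p,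
      (2 * (k : ℝ) - 1) * (‖a 1 k‖ + ‖b 1 k‖) with hS1
  clear_value c S1
  -- pointwise bound for n ≥ 2
  have hpoint : ∀ k ∈ Finset.Icc 1 p, ∀ n : ℕ,
      (if 2 ≤ n then (2 * ((k : ℝ) - 1) + n) *
          (‖A n k‖ + ‖B n k‖) else 0)
      ≤ (if 2 ≤ n then (2 * ((k : ℝ) - 1) + n) *
          (‖a n k - A n k‖ + ‖b n k - B n k‖) else 0)
        + c * (if 2 ≤ n then (2 * ((k : ℝ) - 1) + n * (lam * n + 1 - lam)) *
          (‖a n k‖ + ‖b n k‖) else 0) := by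
    intro k hk n
    rw [Finset.mem_Icc] at hk
    have hk1 : (1:ℝ) ≤ k := by exact_mod_cast hk.1
    have hkp : (k:ℝ) ≤ p := by exact_mod_cast hk.2
    by_cases hn : 2 ≤ n
    · simp only [hn, if_true]
      have hn2 : (2:ℝ) ≤ n := by exact_mod_cast hn
      have hw0 : (0:ℝ) ≤ 2 * ((k : ℝ) - 1) + n := by linarith
      have htriA := abs_le_abs_sub_add (a n k) (A n k)
      have htriB := abs_le_abs_sub_add (b n k) (B n k)
      have hwW : (2 * ((k : ℝ) - 1) + n) ≤ c * (2 * ((k : ℝ) - 1) + n * (lam * n + 1 - lam)) := by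
        rw [hc, div_mul_eq_mul_div, le_div_iff₀ hplpos]
        have hkey0 : (1:ℝ) ≤ (p:ℝ) * ((n:ℝ) + 1) := by nlinarith
        have key : 2 * ((k:ℝ) - 1) + n ≤ (p:ℝ) * ((n:ℝ) * ((n:ℝ) - 1)) := by
          nlinarith [mul_nonneg (sub_nonneg.2 hn2) (sub_nonneg.2 hkey0)]
        nlinarith [mul_le_mul_of_nonneg_left key hlam0.le]
      have hab0 : (0:ℝ) ≤ ‖a n k‖ + ‖b n k‖ := by positivity
      have h1 : (2 * ((k : ℝ) - 1) + n) * (‖A n k‖ + ‖B n k‖)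
          ≤ (2 * ((k : ℝ) - 1) + n) *
              ((‖a n k - A n k‖ + ‖b n k - B n k‖)
               + (‖a n k‖ + ‖b n k‖)) :=
        mul_le_mul_of_nonneg_left (by linarith) hw0
      have h2 : (2 * ((k : ℝ) - 1) + n) * (‖a n k‖ + ‖b n k‖)
          ≤ (c * (2 * ((k : ℝ) - 1) + n * (lam * n + 1 - lam))) *
              (‖a n k‖ + ‖b n k‖) :=
        mul_le_mul_of_nonneg_right hwW hab0
      rw [mul_add] at h1
      rw [mul_assoc] at h2
      linarith
    · simp [hn]
  -- per-k tsum bound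
  have hkey : ∀ k ∈ Finset.Icc 1 p,
      (∑' n : ℕ, (if 2 ≤ n then (2 * ((k : ℝ) - 1) + n) *
          (‖A n k‖ + ‖B n k‖) else 0))
      ≤ (∑' n : ℕ, (if 2 ≤ n then (2 * ((k : ℝ) - 1) + n) *
          (‖a n k - A n k‖ + ‖b n k - B n k‖) else 0))
        + c * (∑' n : ℕ, (if 2 ≤ n then (2 * ((k : ℝ) - 1) + n * (lam * n + 1 - lam)) *
          (‖a n k‖ + ‖b n k‖) else 0)) := by
    intro k hk
    have hsd := hABsum k hk
    have hsw := hsumW k hk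
    have hs2 : Summable (fun n : ℕ =>
        (if 2 ≤ n then (2 * ((k : ℝ) - 1) + n) *
          (‖a n k - A n k‖ + ‖b n k - B n k‖) else 0)
        + c * (if 2 ≤ n then (2 * ((k : ℝ) - 1) + n * (lam * n + 1 - lam)) *
          (‖a n k‖ + ‖b n k‖) else 0)) :=
      hsd.add (hsw.mul_left c)
    have hk1 : (1:ℝ) ≤ k := by exact_mod_cast (Finset.mem_Icc.1 hk).1
    have hnn : ∀ n : ℕ, 0 ≤ (if 2 ≤ n then (2 * ((k : ℝ) - 1) + n) *
        (‖A n k‖ + ‖B n k‖) else 0) := by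
      intro n
      by_cases hn : 2 ≤ n
      · simp only [hn, if_true]
        have hw0 : (0:ℝ) ≤ 2 * ((k : ℝ) - 1) + n := by
          have : (0:ℝ) ≤ n := Nat.cast_nonneg n
          linarith
        exact mul_nonneg hw0 (by positivity)
      · simp [hn]
    have hsA : Summable (fun n : ℕ => (if 2 ≤ n then (2 * ((k : ℝ) - 1) + n) *
        (‖A n k‖ + ‖B n k‖) else 0)) :=
      Summable.of_nonneg_of_le hnn (hpoint k hk) hs2
    calc (∑' n : ℕ, (if 2 ≤ n then (2 * ((k : ℝ) - 1) + n) *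
          (‖A n k‖ + ‖B n k‖) else 0))
        ≤ ∑' n : ℕ, ((if 2 ≤ n then (2 * ((k : ℝ) - 1) + n) *
            (‖a n k - A n k‖ + ‖b n k - B n k‖) else 0)
          + c * (if 2 ≤ n then (2 * ((k : ℝ) - 1) + n * (lam * n + 1 - lam)) *
            (‖a n k‖ + ‖b n k‖) else 0)) :=
          hsA.tsum_le_tsum (hpoint k hk) hs2
      _ = _ := by rw [Summable.tsum_add hsd (hsw.mul_left c), tsum_mul_left]
  -- global bound
  have hmain : (∑ k ∈ Finset.Icc 1 p, ∑' n : ℕ,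
        (if 2 ≤ n then (2 * ((k : ℝ) - 1) + n) *
          (‖A n k‖ + ‖B n k‖) else 0))
      ≤ (∑ k ∈ Finset.Icc 1 p, ∑' n : ℕ,
          (if 2 ≤ n then (2 * ((k : ℝ) - 1) + n) *
            (‖a n k - A n k‖ + ‖b n k - B n k‖) else 0))
        + c * (∑ k ∈ Finset.Icc 1 p, ∑' n : ℕ,
          (if 2 ≤ n then (2 * ((k : ℝ) - 1) + n * (lam * n + 1 - lam)) *
            (‖a n k‖ + ‖b n k‖) else 0)) := by
    calc (∑ k ∈ Finset.Icc 1 p, ∑' n : ℕ,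
          (if 2 ≤ n then (2 * ((k : ℝ) - 1) + n) *
            (‖A n k‖ + ‖B n k‖) else 0))
        ≤ ∑ k ∈ Finset.Icc 1 p,
            ((∑' n : ℕ, (if 2 ≤ n then (2 * ((k : ℝ) - 1) + n) *
              (‖a n k - A n k‖ + ‖b n k - B n k‖) else 0))
            + c * (∑' n : ℕ, (if 2 ≤ n then (2 * ((k : ℝ) - 1) + n * (lam * n + 1 - lam)) *
              (‖a n k‖ + ‖b n k‖) else 0))) :=
          Finset.sum_le_sum hkey
      _ = _ := by rw [Finset.sum_add_distrib, Finset.mul_sum]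
  -- split S1 at k = 1
  have hIcc : insert 1 (Finset.Icc 2 p) = Finset.Icc 1 p := Finset.insert_Icc_add_one_left_eq_Icc hp
  have ha11abs : ‖a 1 1‖ = 1 := by rw [ha11]; simp
  have hsplit : S1 = (1 + ‖b 1 1‖) + ∑ k ∈ Finset.Icc 2 p,
      (2 * (k : ℝ) - 1) * (‖a 1 k‖ + ‖b 1 k‖) := by
    rw [hS1, ← hIcc, Finset.sum_insert (by simp)]
    rw [ha11abs]
    norm_num
  -- triangle inequalities at n = 1
  have hB11 : ‖B 1 1‖ ≤ ‖b 1 1 - B 1 1‖ + ‖b 1 1‖ :=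
    abs_le_abs_sub_add _ _
  have hSig2 : ∑ k ∈ Finset.Icc 2 p,
        (2 * (k : ℝ) - 1) * (‖A 1 k‖ + ‖B 1 k‖)
      ≤ (∑ k ∈ Finset.Icc 2 p,
          (2 * (k : ℝ) - 1) * (‖a 1 k‖ + ‖b 1 k‖))
        + ∑ k ∈ Finset.Icc 2 p,
          (2 * (k : ℝ) - 1) * (‖a 1 k - A 1 k‖ + ‖b 1 k - B 1 k‖) := by
    rw [← Finset.sum_add_distrib]
    refine Finset.sum_le_sum fun k hk => ?_
    have hk2 : (2:ℝ) ≤ k := by exact_mod_cast (Finset.mem_Icc.1 hk).1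
    have hw0 : (0:ℝ) ≤ 2 * (k:ℝ) - 1 := by linarith
    have htriA := abs_le_abs_sub_add (a 1 k) (A 1 k)
    have htriB := abs_le_abs_sub_add (b 1 k) (B 1 k)
    rw [← mul_add]
    exact mul_le_mul_of_nonneg_left (by linarith) hw0
  have hSig2p : ∑ k ∈ Finset.Icc 2 p, (‖A 1 k‖ + ‖B 1 k‖)
      ≤ ∑ k ∈ Finset.Icc 2 p,
          (2 * (k : ℝ) - 1) * (‖A 1 k‖ + ‖B 1 k‖) := by
    refine Finset.sum_le_sum fun k hk => ?_
    have hk2 : (2:ℝ) ≤ k := by exact_mod_cast (Finset.mem_Icc.1 hk).1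
    have h1 : (1:ℝ) ≤ 2 * (k:ℝ) - 1 := by linarith
    exact le_mul_of_one_le_left (by positivity) h1
  -- nonnegativity of auxiliary sums
  have hSdT0 : 0 ≤ ∑ k ∈ Finset.Icc 1 p, ∑' n : ℕ,
      (if 2 ≤ n then (2 * ((k : ℝ) - 1) + n) *
        (‖a n k - A n k‖ + ‖b n k - B n k‖) else 0) := by
    refine Finset.sum_nonneg fun k hk => tsum_nonneg fun n => ?_
    have hk1 : (1:ℝ) ≤ k := by exact_mod_cast (Finset.mem_Icc.1 hk).1
    by_cases hn : 2 ≤ n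
    · simp only [hn, if_true]
      have : (0:ℝ) ≤ n := Nat.cast_nonneg n
      exact mul_nonneg (by linarith) (by positivity)
    · simp [hn]
  have hD20 : 0 ≤ ∑ k ∈ Finset.Icc 2 p,
      (2 * (k : ℝ) - 1) * (‖a 1 k - A 1 k‖ + ‖b 1 k - B 1 k‖) := by
    refine Finset.sum_nonneg fun k hk => ?_
    have hk2 : (2:ℝ) ≤ k := by exact_mod_cast (Finset.mem_Icc.1 hk).1
    exact mul_nonneg (by linarith) (by positivity)
  -- key numeric bounds
  have hcSW := mul_le_mul_of_nonneg_left hSF hc0.le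
  rw [hcl, sub_mul, one_mul] at hδ
  have hcS1pos : 0 < c * (2 - S1) := mul_pos hc0 (by linarith)
  refine ⟨?_, add_nonneg (norm_nonneg _)
    (Finset.sum_nonneg fun k _ => add_nonneg (norm_nonneg _)
      (norm_nonneg _)), ?_⟩
  · linarith only [hmain, hcSW, hNbhd, hδ, hsplit, hB11, hSig2]
  · linarith only [hB11, hSig2p, hSig2, hNbhd, hSdT0, hδ, hcS1pos, hsplit]
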